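/- Let H be a complex Hilbert space, θ ∈ (π/2, π), α ∈ (1, 2), γ ∈ (0, 1), κ > 0 and M > 0. Let G be a continuous function from ℂ ∖ {0} to the bounded linear operators on H such that ‖G(z)‖ ≤ M |z|^{−α−γ} for every z ≠ 0 with |arg z| ≤ θ. For s > 0 define the operator E(s) = (1/(2π)) ( ∫_κ^∞ e^{s r e^{iθ}} G(r e^{iθ}) e^{iθ} dr − ∫_κ^∞ e^{s r e^{−iθ}} G(r e^{−iθ}) e^{−iθ} dr + i ∫_{−θ}^{θ} e^{s κ e^{iφ}} G(κ e^{iφ}) κ e^{iφ} dφ ), the contour integral (1/(2πi)) ∫_{Γ_{θ,κ}} e^{zs} G(z) dz; these Bochner integrals converge absolutely since cos θ < 0. Then there exists a constant c > 0, depending only on θ, α, γ, such that for every t > 0 with κ t ≤ 1 one has ∫₀ᵗ ‖E(s)‖² ds ≤ c M² κ^{1−2α−2γ}. -/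

import Mathlib

open Set MeasureTheory Complex

theorem solution_kernel_square_integral_estimate
    {H : Type*} [NormedAddCommGroup H] [InnerProductSpace ℂ H] [CompleteSpace H]
    (θ α γ κ M : ℝ) (hθ : θ ∈ Ioo (Real.pi / 2) Real.pi)
    (hα : α ∈ Ioo (1 : ℝ) 2) (hγ : γ ∈ Ioo (0 : ℝ) 1) (hκ : 0 < κ) (hM : 0 < M)
    (G : ℂ → H →L[ℂ] H) (hGcont : ContinuousOn G {(0 : ℂ)}ᶜ)
    (hGbound : ∀ z : ℂ, z ≠ 0 → |z.arg| ≤ θ →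
      ‖G z‖ ≤ M * ‖z‖ ^ (-α - γ))
    (E : ℝ → H →L[ℂ] H)
    (hE : ∀ s : ℝ, 0 < s → E s =
      ((2 * Real.pi)⁻¹ : ℝ) •
        ((∫ r in Ioi κ,
            (Complex.exp ((s : ℂ) * (r : ℂ) * Complex.exp ((θ : ℂ) * Complex.I)) *
              Complex.exp ((θ : ℂ) * Complex.I)) •
              G ((r : ℂ) * Complex.exp ((θ : ℂ) * Complex.I))) -
          (∫ r in Ioi κ,
            (Complex.exp ((s : ℂ) * (r : ℂ) * Complex.exp (-(θ : ℂ) * Complex.I)) *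
              Complex.exp (-(θ : ℂ) * Complex.I)) •
              G ((r : ℂ) * Complex.exp (-(θ : ℂ) * Complex.I))) +
          ∫ φ in (-θ)..θ,
            (Complex.I *
              Complex.exp ((s : ℂ) * (κ : ℂ) * Complex.exp ((φ : ℂ) * Complex.I)) *
              (κ : ℂ) * Complex.exp ((φ : ℂ) * Complex.I)) •
              G ((κ : ℂ) * Complex.exp ((φ : ℂ) * Complex.I)))) :
    ∃ c > (0 : ℝ), ∀ t : ℝ, 0 < t → κ * t ≤ 1 →
      (∫ s in Ioc (0 : ℝ) t, ‖E s‖ ^ 2) ≤ c * M ^ 2 * κ ^ (1 - 2 * α - 2 * γ) := by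
  have hπ := Real.pi_pos
  obtain ⟨hθ1, hθ2⟩ := hθ
  obtain ⟨hα1, hα2⟩ := hα
  obtain ⟨hγ1, hγ2⟩ := hγ
  have hθ0 : 0 < θ := lt_trans (by positivity) hθ1
  have hβ : 1 < α + γ := by linarith
  have hp : -α - γ < -1 := by linarith
  -- basic facts about points r·e^{iψ}
  have habs : ∀ (ψ : ℝ) (r : ℝ), 0 < r →
      ‖(r : ℂ) * Complex.exp ((ψ : ℂ) * Complex.I)‖ = r := by
    intro ψ r hr
    rw [norm_mul, Complex.norm_real, Complex.norm_exp_ofReal_mul_I, Real.norm_eq_abs, abs_of_pos hr, mul_one]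
  have harg : ∀ (ψ : ℝ), |ψ| ≤ θ → ∀ (r : ℝ), 0 < r →
      ((r : ℂ) * Complex.exp ((ψ : ℂ) * Complex.I)).arg = ψ := by
    intro ψ hψ r hr
    have h1 := abs_le.1 hψ
    rw [Complex.exp_mul_I]
    exact Complex.arg_mul_cos_add_sin_mul_I hr ⟨by linarith [h1.1], by linarith [h1.2]⟩
  have hGz : ∀ (ψ : ℝ), |ψ| ≤ θ → ∀ (r : ℝ), 0 < r →
      ‖G ((r : ℂ) * Complex.exp ((ψ : ℂ) * Complex.I))‖ ≤ M * r ^ (-α - γ) := by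
    intro ψ hψ r hr
    have hne : (r : ℂ) * Complex.exp ((ψ : ℂ) * Complex.I) ≠ 0 := by
      intro h
      have := habs ψ r hr
      rw [h, norm_zero] at this
      exact hr.ne this
    have hb := hGbound _ hne (by rw [harg ψ hψ r hr]; exact hψ)
    rwa [habs ψ r hr] at hb
  have hre : ∀ (s r ψ : ℝ),
      ((s : ℂ) * (r : ℂ) * Complex.exp ((ψ : ℂ) * Complex.I)).re = s * r * Real.cos ψ := by
    intro s r ψ
    have h1 : (s : ℂ) * (r : ℂ) = ((s * r : ℝ) : ℂ) := by push_cast; ring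
    rw [h1, Complex.re_ofReal_mul, Complex.exp_ofReal_mul_I_re]
  -- integrability and value of the dominating function on the rays
  have hrayInt : IntegrableOn (fun r : ℝ => M * r ^ (-α - γ)) (Ioi κ) :=
    (integrableOn_Ioi_rpow_of_lt hp hκ).const_mul M
  have hrayval : (∫ r in Ioi κ, M * r ^ (-α - γ)) = M * (κ ^ (1 - α - γ) / (α + γ - 1)) := by
    rw [MeasureTheory.integral_const_mul, integral_Ioi_rpow_of_lt hp hκ,
      show -α - γ + 1 = 1 - α - γ by ring]
    rw [neg_div, show (1 - α - γ : ℝ) = -(α + γ - 1) by ring, div_neg, neg_neg]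
  -- bound for either ray integral
  have hray : ∀ (ψ : ℝ), |ψ| ≤ θ → Real.cos ψ ≤ 0 → ∀ (s : ℝ), 0 < s →
      ‖∫ r in Ioi κ,
        (Complex.exp ((s : ℂ) * (r : ℂ) * Complex.exp ((ψ : ℂ) * Complex.I)) *
          Complex.exp ((ψ : ℂ) * Complex.I)) •
          G ((r : ℂ) * Complex.exp ((ψ : ℂ) * Complex.I))‖ ≤
        M * (κ ^ (1 - α - γ) / (α + γ - 1)) := by
    intro ψ hψ hcos s hs
    rw [← hrayval]
    refine MeasureTheory.norm_integral_le_of_norm_le hrayInt ?_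
    filter_upwards [ae_restrict_mem measurableSet_Ioi] with r hr
    have hr0 : 0 < r := hκ.trans hr
    rw [norm_smul]
    have hsc : ‖Complex.exp ((s : ℂ) * (r : ℂ) * Complex.exp ((ψ : ℂ) * Complex.I)) *
        Complex.exp ((ψ : ℂ) * Complex.I)‖ ≤ 1 := by
      rw [norm_mul, Complex.norm_exp,
        Complex.norm_exp_ofReal_mul_I, mul_one, hre]
      refine Real.exp_le_one_iff.2 ?_
      have : 0 ≤ s * r := by positivity
      nlinarith
    calc ‖Complex.exp ((s : ℂ) * (r : ℂ) * Complex.exp ((ψ : ℂ) * Complex.I)) *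
          Complex.exp ((ψ : ℂ) * Complex.I)‖ *
          ‖G ((r : ℂ) * Complex.exp ((ψ : ℂ) * Complex.I))‖
        ≤ 1 * (M * r ^ (-α - γ)) :=
          mul_le_mul hsc (hGz ψ hψ r hr0) (norm_nonneg _) one_pos.le
      _ = M * r ^ (-α - γ) := one_mul _
  -- bound for the arc integral
  have harc : ∀ (s : ℝ), 0 < s → s * κ ≤ 1 →
      ‖∫ φ in (-θ)..θ,
        (Complex.I *
          Complex.exp ((s : ℂ) * (κ : ℂ) * Complex.exp ((φ : ℂ) * Complex.I)) *
          (κ : ℂ) * Complex.exp ((φ : ℂ) * Complex.I)) •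
          G ((κ : ℂ) * Complex.exp ((φ : ℂ) * Complex.I))‖ ≤
        (Real.exp 1 * κ * (M * κ ^ (-α - γ))) * (2 * θ) := by
    intro s hs hsκ
    have h := intervalIntegral.norm_integral_le_of_norm_le_const
      (a := -θ) (b := θ) (C := Real.exp 1 * κ * (M * κ ^ (-α - γ)))
      (f := fun φ : ℝ =>
        (Complex.I *
          Complex.exp ((s : ℂ) * (κ : ℂ) * Complex.exp ((φ : ℂ) * Complex.I)) *
          (κ : ℂ) * Complex.exp ((φ : ℂ) * Complex.I)) •
          G ((κ : ℂ) * Complex.exp ((φ : ℂ) * Complex.I))) ?_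
    · calc ‖_‖ ≤ Real.exp 1 * κ * (M * κ ^ (-α - γ)) * |θ - -θ| := h
        _ = Real.exp 1 * κ * (M * κ ^ (-α - γ)) * (2 * θ) := by
            rw [abs_of_pos (by linarith : (0:ℝ) < θ - -θ)]; ring
    · intro x hx
      rw [Set.uIoc_of_le (by linarith : -θ ≤ θ)] at hx
      have hxθ : |x| ≤ θ := abs_le.2 ⟨hx.1.le, hx.2⟩
      rw [norm_smul]
      have hscv : ‖Complex.I *
          Complex.exp ((s : ℂ) * (κ : ℂ) * Complex.exp ((x : ℂ) * Complex.I)) *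
          (κ : ℂ) * Complex.exp ((x : ℂ) * Complex.I)‖ =
          Real.exp (s * κ * Real.cos x) * κ := by
        rw [norm_mul, norm_mul, norm_mul, Complex.norm_I,
          Complex.norm_exp, Complex.norm_exp_ofReal_mul_I, Complex.norm_real, Real.norm_eq_abs,
          abs_of_pos hκ, hre, one_mul, mul_one]
      rw [hscv]
      have hG := hGz x hxθ κ hκ
      have hexp : Real.exp (s * κ * Real.cos x) ≤ Real.exp 1 := by
        refine Real.exp_le_exp.2 ?_
        have h1 : Real.cos x ≤ 1 := Real.cos_le_one x
        have h2 : 0 ≤ s * κ := by positivity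
        nlinarith
      exact mul_le_mul (by gcongr) hG (norm_nonneg _) (by positivity)
  -- the pointwise bound on E
  set K : ℝ := (2 * Real.pi)⁻¹ * (2 / (α + γ - 1) + Real.exp 1 * (2 * θ)) with hKdef
  have hK : 0 < K := by
    have h1 : 0 < α + γ - 1 := by linarith
    have h2 : 0 < Real.exp 1 := Real.exp_pos 1
    have h3 : 0 < (2 * Real.pi)⁻¹ := by positivity
    positivity
  have hκp1 : κ * κ ^ (-α - γ) = κ ^ (1 - α - γ) := by
    rw [show (1 - α - γ : ℝ) = 1 + (-α - γ) by ring, Real.rpow_add hκ, Real.rpow_one]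
  have hEbound : ∀ (t : ℝ), κ * t ≤ 1 → ∀ s ∈ Ioc (0 : ℝ) t,
      ‖E s‖ ≤ K * (M * κ ^ (1 - α - γ)) := by
    intro t ht s hs
    have hs0 : 0 < s := hs.1
    have hsκ : s * κ ≤ 1 := by nlinarith [hs.2, hκ.le]
    rw [hE s hs0]
    have hneg : -(θ : ℂ) * Complex.I = ((-θ : ℝ) : ℂ) * Complex.I := by push_cast; ring
    rw [norm_smul]
    have h1 := hray θ (by rw [abs_of_pos hθ0]) (Real.cos_nonpos_of_pi_div_two_le_of_le
      hθ1.le (by linarith)) s hs0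
    have h2 := hray (-θ) (by rw [abs_neg, abs_of_pos hθ0])
      (by rw [Real.cos_neg]; exact Real.cos_nonpos_of_pi_div_two_le_of_le hθ1.le (by linarith))
      s hs0
    have h3 := harc s hs0 hsκ
    simp only [hneg]
    have hnorm3 : ‖(∫ r in Ioi κ,
        (Complex.exp ((s : ℂ) * (r : ℂ) * Complex.exp ((θ : ℂ) * Complex.I)) *
          Complex.exp ((θ : ℂ) * Complex.I)) •
          G ((r : ℂ) * Complex.exp ((θ : ℂ) * Complex.I))) -
        (∫ r in Ioi κ,
        (Complex.exp ((s : ℂ) * (r : ℂ) * Complex.exp (((-θ : ℝ) : ℂ) * Complex.I)) *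
          Complex.exp (((-θ : ℝ) : ℂ) * Complex.I)) •
          G ((r : ℂ) * Complex.exp (((-θ : ℝ) : ℂ) * Complex.I))) +
        ∫ φ in (-θ)..θ,
        (Complex.I *
          Complex.exp ((s : ℂ) * (κ : ℂ) * Complex.exp ((φ : ℂ) * Complex.I)) *
          (κ : ℂ) * Complex.exp ((φ : ℂ) * Complex.I)) •
          G ((κ : ℂ) * Complex.exp ((φ : ℂ) * Complex.I))‖ ≤
        M * (κ ^ (1 - α - γ) / (α + γ - 1)) + M * (κ ^ (1 - α - γ) / (α + γ - 1)) +
          (Real.exp 1 * κ * (M * κ ^ (-α - γ))) * (2 * θ) := by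
      refine (norm_add_le _ _).trans ?_
      refine add_le_add ((norm_sub_le _ _).trans (add_le_add h1 h2)) h3
    refine le_trans ?_ (le_of_eq (?_ : (2 * Real.pi)⁻¹ *
        (M * (κ ^ (1 - α - γ) / (α + γ - 1)) + M * (κ ^ (1 - α - γ) / (α + γ - 1)) +
          (Real.exp 1 * κ * (M * κ ^ (-α - γ))) * (2 * θ)) = K * (M * κ ^ (1 - α - γ))))
    · rw [norm_inv, Real.norm_eq_abs, abs_of_pos (by positivity : (0:ℝ) < 2 * Real.pi)]
      exact mul_le_mul_of_nonneg_left hnorm3 (by positivity)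
    · rw [hKdef]
      rw [show Real.exp 1 * κ * (M * κ ^ (-α - γ)) * (2 * θ) =
        Real.exp 1 * (2 * θ) * (M * (κ * κ ^ (-α - γ))) by ring, hκp1]
      ring
  -- conclude
  refine ⟨K ^ 2, by positivity, ?_⟩
  intro t ht hκt
  have hpow2 : (K * (M * κ ^ (1 - α - γ))) ^ 2 =
      K ^ 2 * M ^ 2 * (κ * κ ^ (1 - 2 * α - 2 * γ)) := by
    have : κ ^ (1 - α - γ) * κ ^ (1 - α - γ) = κ * κ ^ (1 - 2 * α - 2 * γ) := by
      rw [← Real.rpow_add hκ, show (1 - α - γ) + (1 - α - γ) = 1 + (1 - 2 * α - 2 * γ) by ring,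
        Real.rpow_add hκ, Real.rpow_one]
    linear_combination (K ^ 2 * M ^ 2) * this
  have hfinal : t * (K * (M * κ ^ (1 - α - γ))) ^ 2 ≤ K ^ 2 * M ^ 2 * κ ^ (1 - 2 * α - 2 * γ) := by
    rw [hpow2]
    have hX : (0 : ℝ) < κ ^ (1 - 2 * α - 2 * γ) := Real.rpow_pos_of_pos hκ _
    have hKM : (0 : ℝ) ≤ K ^ 2 * M ^ 2 * κ ^ (1 - 2 * α - 2 * γ) := by positivity
    nlinarith [hκt, hX.le, sq_nonneg K, sq_nonneg M, mul_pos (mul_pos (pow_pos hK 2) (pow_pos hM 2)) hX]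
  by_cases hint : IntegrableOn (fun s => ‖E s‖ ^ 2) (Ioc (0 : ℝ) t) volume
  · calc (∫ s in Ioc (0 : ℝ) t, ‖E s‖ ^ 2)
        ≤ ∫ _ in Ioc (0 : ℝ) t, (K * (M * κ ^ (1 - α - γ))) ^ 2 := by
          refine setIntegral_mono_on hint
            (integrableOn_const measure_Ioc_lt_top.ne) measurableSet_Ioc ?_
          intro s hs
          exact pow_le_pow_left₀ (norm_nonneg _) (hEbound t hκt s hs) 2
      _ = t * (K * (M * κ ^ (1 - α - γ))) ^ 2 := by
          rw [setIntegral_const, measureReal_def, Real.volume_Ioc, smul_eq_mul,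
            ENNReal.toReal_ofReal (by linarith : (0:ℝ) ≤ t - 0), sub_zero]
      _ ≤ K ^ 2 * M ^ 2 * κ ^ (1 - 2 * α - 2 * γ) := hfinal
  · rw [MeasureTheory.integral_undef hint]
    positivity
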